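/- For all c > 0 and ξ, ξ' ∈ ℝ³ one has the pointwise bound |1 − (E_c(ξ)+c²)(E_c(ξ')+c²)/(N_c(ξ)N_c(ξ'))| ≤ (3c²|ξ||ξ'| + 2c³(|ξ| + |ξ'|)) / (2c⁴). -/
import Mathlib


open Real

noncomputable def Ec (c : ℝ) (ξ : EuclideanSpace ℝ (Fin 3)) : ℝ :=
  Real.sqrt (c ^ 2 * ‖ξ‖ ^ 2 + c ^ 4)

noncomputable def Nc (c : ℝ) (ξ : EuclideanSpace ℝ (Fin 3)) : ℝ :=
  Real.sqrt (2 * Ec c ξ * (Ec c ξ + c ^ 2))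

lemma Ec_ge (c : ℝ) (hc : 0 < c) (ξ : EuclideanSpace ℝ (Fin 3)) :
    c ^ 2 ≤ Ec c ξ := by
  have h : c ^ 2 = Real.sqrt ((c ^ 2) ^ 2) := (Real.sqrt_sq (by positivity)).symm
  rw [h, Ec]
  exact Real.sqrt_le_sqrt (by nlinarith [sq_nonneg ‖ξ‖, sq_nonneg c])

lemma Ec_le (c : ℝ) (hc : 0 < c) (ξ : EuclideanSpace ℝ (Fin 3)) :
    Ec c ξ ≤ c * ‖ξ‖ + c ^ 2 := by
  have h0 : 0 ≤ c * ‖ξ‖ + c ^ 2 := by positivity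
  rw [Ec, show c * ‖ξ‖ + c ^ 2 = Real.sqrt ((c * ‖ξ‖ + c ^ 2) ^ 2) from
    (Real.sqrt_sq h0).symm]
  exact Real.sqrt_le_sqrt (by nlinarith [mul_nonneg (pow_pos hc 3).le (norm_nonneg ξ)])

lemma Nc_sq (c : ℝ) (hc : 0 < c) (ξ : EuclideanSpace ℝ (Fin 3)) :
    (Nc c ξ) ^ 2 = 2 * Ec c ξ * (Ec c ξ + c ^ 2) := by
  have hE := Ec_ge c hc ξ
  have hc2 : (0:ℝ) < c ^ 2 := by positivity
  exact Real.sq_sqrt (by nlinarith)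

lemma Nc_pos (c : ℝ) (hc : 0 < c) (ξ : EuclideanSpace ℝ (Fin 3)) :
    0 < Nc c ξ := by
  have hE := Ec_ge c hc ξ
  have hc2 : (0:ℝ) < c ^ 2 := by positivity
  exact Real.sqrt_pos.mpr (by nlinarith)

set_option maxHeartbeats 1000000 in
theorem large_component_weight_bound
    (c : ℝ) (hc : 0 < c) (ξ ξ' : EuclideanSpace ℝ (Fin 3)) :
    |1 - (Ec c ξ + c ^ 2) * (Ec c ξ' + c ^ 2) / (Nc c ξ * Nc c ξ')| ≤
      (3 * c ^ 2 * ‖ξ‖ * ‖ξ'‖ + 2 * c ^ 3 * (‖ξ‖ + ‖ξ'‖)) / (2 * c ^ 4) := by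
  set a := ‖ξ‖ with ha_def
  set b := ‖ξ'‖ with hb_def
  have ha : 0 ≤ a := norm_nonneg _
  have hb : 0 ≤ b := norm_nonneg _
  have hc2 : (0:ℝ) < c ^ 2 := by positivity
  set E := Ec c ξ with hE_def
  set E' := Ec c ξ' with hE'_def
  set N := Nc c ξ with hN_def
  set N' := Nc c ξ' with hN'_def
  have hEge : c ^ 2 ≤ E := Ec_ge c hc ξ
  have hE'ge : c ^ 2 ≤ E' := Ec_ge c hc ξ'
  have hEle : E ≤ c * a + c ^ 2 := Ec_le c hc ξ
  have hE'le : E' ≤ c * b + c ^ 2 := Ec_le c hc ξ'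
  have hEpos : 0 < E := lt_of_lt_of_le hc2 hEge
  have hE'pos : 0 < E' := lt_of_lt_of_le hc2 hE'ge
  have hNsq : N ^ 2 = 2 * E * (E + c ^ 2) := Nc_sq c hc ξ
  have hN'sq : N' ^ 2 = 2 * E' * (E' + c ^ 2) := Nc_sq c hc ξ'
  have hNpos : 0 < N := Nc_pos c hc ξ
  have hN'pos : 0 < N' := Nc_pos c hc ξ'
  clear_value a b E E' N N'
  set T := (E + c ^ 2) * (E' + c ^ 2) / (N * N') with hT_def
  have hPpos : 0 < E + c ^ 2 := by linarith
  have hP'pos : 0 < E' + c ^ 2 := by linarith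
  have hT0 : 0 ≤ T := by positivity
  have hTsq : T ^ 2 = (E + c ^ 2) * (E' + c ^ 2) / (4 * E * E') := by
    rw [hT_def, div_pow, mul_pow N N', hNsq, hN'sq]
    field_simp
    ring
  have hTle1 : T ≤ 1 := by
    have hsq : T ^ 2 ≤ 1 := by
      rw [hTsq, div_le_one (by positivity)]
      nlinarith
    nlinarith
  have habs : |1 - T| = 1 - T := abs_of_nonneg (by linarith)
  rw [habs]
  have step1 : 1 - T ≤ 1 - T ^ 2 := by nlinarith
  have step2 : 1 - T ^ 2 ≤ (3 * c ^ 2 * a * b + 2 * c ^ 3 * (a + b)) / (2 * c ^ 4) := by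
    rw [hTsq]
    rw [show (1:ℝ) - (E + c ^ 2) * (E' + c ^ 2) / (4 * E * E') =
      (4 * E * E' - (E + c ^ 2) * (E' + c ^ 2)) / (4 * E * E') by field_simp]
    rw [div_le_div_iff₀ (by positivity) (by positivity)]
    have key1 : 4 * E * E' - (E + c ^ 2) * (E' + c ^ 2) ≤
        3 * c ^ 2 * a * b + 2 * c ^ 3 * (a + b) := by
      nlinarith [mul_nonneg (sub_nonneg.mpr hEle) (sub_nonneg.mpr hE'ge),
        mul_nonneg (mul_nonneg hc.le ha) (sub_nonneg.mpr hE'le),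
        mul_nonneg (sub_nonneg.mpr hEle) hc2.le,
        mul_nonneg (sub_nonneg.mpr hE'le) hc2.le,
        mul_nonneg (sub_nonneg.mpr hEge) (sub_nonneg.mpr hE'ge)]
    have key2 : (0:ℝ) ≤ 3 * c ^ 2 * a * b + 2 * c ^ 3 * (a + b) := by positivity
    have key3 : 2 * c ^ 4 ≤ 4 * E * E' := by
      nlinarith [mul_le_mul hEge hE'ge hc2.le hEpos.le]
    exact mul_le_mul key1 key3 (by positivity) key2
  linarith
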